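/- arXiv:2601.13822 — 3 statements merged into one kernel-verified Lean document; each statement's English description precedes it below -/
import Mathlib

section
/- Let q be a prime and d, Δ positive integers with q > Δ·d. For each polynomial p of degree at most d over the field GF(q), let S_p = {(i, p(i)) : i ∈ GF(q)} ⊆ GF(q) × GF(q). Then the family {S_p : p a polynomial of degree at most d over GF(q)}, which consists of q^{d+1} distinct sets of size q each over a groundset of size q², is Δ-union-free: for every polynomial p_0 and every Δ polynomials p_1, …, p_Δ, each distinct from p_0, one has S_{p_0} ⊄ S_{p_1} ∪ … ∪ S_{p_Δ}. -/
/-- **Erdős–Frankl–Füredi construction.** Let `q` be a prime and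
`d, Δ > 0` with `q > Δ·d`. For each polynomial `p` of degree at most `d` over `GF(q)`,
let `S_p = {(i, p(i)) : i ∈ GF(q)}`. Then: the map `p ↦ S_p` is injective on polynomials
of degree at most `d` (so the family has `q^{d+1}` distinct members), each set `S_p` has
size `q` (over the groundset `GF(q) × GF(q)` of size `q²`), and the family is
`Δ`-union-free: no `S_{p₀}` is contained in the union of `Δ` sets `S_{p_1}, …, S_{p_Δ}`
with all `p_i` distinct from `p₀`. -/
theorem stmt_17 (q d Δ : ℕ) (hq : q.Prime) (hd : 0 < d) (hΔ : 0 < Δ)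
    (hqd : Δ * d < q) :
    (∀ p₁ p₂ : Polynomial (ZMod q), p₁.natDegree ≤ d → p₂.natDegree ≤ d →
      Set.range (fun x : ZMod q => (x, p₁.eval x)) =
        Set.range (fun x : ZMod q => (x, p₂.eval x)) → p₁ = p₂) ∧
    (∀ p : Polynomial (ZMod q),
      (Set.range (fun x : ZMod q => (x, p.eval x))).ncard = q) ∧
    (Nat.card {p : Polynomial (ZMod q) // p.natDegree ≤ d} = q ^ (d + 1)) ∧
    (∀ (p₀ : Polynomial (ZMod q)) (ps : Fin Δ → Polynomial (ZMod q)),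
      p₀.natDegree ≤ d → (∀ j, (ps j).natDegree ≤ d) → (∀ j, ps j ≠ p₀) →
      ¬ Set.range (fun x : ZMod q => (x, p₀.eval x)) ⊆
          ⋃ j, Set.range (fun x : ZMod q => (x, (ps j).eval x))) := by
  haveI : Fact q.Prime := ⟨hq⟩
  have hcard : Fintype.card (ZMod q) = q := ZMod.card q
  have hdq : d < q := lt_of_le_of_lt (Nat.le_mul_of_pos_left d hΔ) hqd
  have key : ∀ p₁ p₂ : Polynomial (ZMod q), p₁.natDegree ≤ d → p₂.natDegree ≤ d →
      (∀ x, p₁.eval x = p₂.eval x) → p₁ = p₂ := by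
    intro p₁ p₂ h1 h2 h
    by_contra hne
    have hsub : p₁ - p₂ ≠ 0 := sub_ne_zero.mpr hne
    have hdeg : (p₁ - p₂).natDegree ≤ d :=
      le_trans (Polynomial.natDegree_sub_le _ _) (max_le h1 h2)
    have hcov : (Finset.univ : Finset (ZMod q)) ⊆ (p₁ - p₂).roots.toFinset := by
      intro x _
      rw [Multiset.mem_toFinset, Polynomial.mem_roots hsub]
      simp [Polynomial.IsRoot, sub_eq_zero, h x]
    have : q ≤ d := by
      calc q = (Finset.univ : Finset (ZMod q)).card := by
              rw [Finset.card_univ, hcard]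
        _ ≤ (p₁ - p₂).roots.toFinset.card := Finset.card_le_card hcov
        _ ≤ (p₁ - p₂).roots.card := Multiset.toFinset_card_le _
        _ ≤ (p₁ - p₂).natDegree := Polynomial.card_roots' _
        _ ≤ d := hdeg
    omega
  refine ⟨?_, ?_, ?_, ?_⟩
  · intro p₁ p₂ h1 h2 hr
    apply key p₁ p₂ h1 h2
    intro x
    have hx : (x, p₁.eval x) ∈ Set.range (fun x : ZMod q => (x, p₂.eval x)) := by
      rw [← hr]; exact Set.mem_range_self x
    obtain ⟨y, hy⟩ := hx
    obtain ⟨h1', h2'⟩ := Prod.mk.injEq .. ▸ hy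
    subst h1'
    exact h2'.symm
  · intro p
    have hinj : Function.Injective (fun x : ZMod q => (x, p.eval x)) :=
      fun a b h => congrArg Prod.fst h
    rw [← Set.image_univ, Set.ncard_image_of_injective _ hinj, Set.ncard_univ,
      Nat.card_eq_fintype_card, hcard]
  · have e1 : {p : Polynomial (ZMod q) // p.natDegree ≤ d} ≃
        Polynomial.degreeLT (ZMod q) (d + 1) := by
      apply Equiv.subtypeEquivRight
      intro p
      rw [Polynomial.mem_degreeLT]
      rcases eq_or_ne p 0 with rfl | hp
      · simp only [Polynomial.natDegree_zero, Polynomial.degree_zero]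
        exact iff_of_true (Nat.zero_le d) (by exact_mod_cast WithBot.bot_lt_coe (d + 1))
      · rw [← Polynomial.natDegree_lt_iff_degree_lt hp]
        omega
    have := Nat.card_congr (e1.trans (Polynomial.degreeLTEquiv (ZMod q) (d + 1)).toEquiv)
    rw [this, Nat.card_eq_fintype_card]
    simp [hcard]
  · intro p₀ ps h0 hps hne hsub
    have hall : ∀ x : ZMod q, ∃ j, (ps j).eval x = p₀.eval x := by
      intro x
      have := hsub (Set.mem_range_self x)
      rw [Set.mem_iUnion] at this
      obtain ⟨j, y, hy⟩ := this
      obtain ⟨h1', h2'⟩ := Prod.mk.injEq .. ▸ hy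
      subst h1'
      exact ⟨j, h2'⟩
    have hcov : (Finset.univ : Finset (ZMod q)) ⊆
        Finset.univ.biUnion (fun j => (p₀ - ps j).roots.toFinset) := by
      intro x _
      obtain ⟨j, hj⟩ := hall x
      refine Finset.mem_biUnion.mpr ⟨j, Finset.mem_univ _, ?_⟩
      rw [Multiset.mem_toFinset,
        Polynomial.mem_roots (sub_ne_zero.mpr (fun h => hne j h.symm))]
      simp [Polynomial.IsRoot, sub_eq_zero, hj]
    have h1 : q ≤ Δ * d := by
      calc q = (Finset.univ : Finset (ZMod q)).card := by
              rw [Finset.card_univ, hcard]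
        _ ≤ (Finset.univ.biUnion (fun j => (p₀ - ps j).roots.toFinset)).card :=
              Finset.card_le_card hcov
        _ ≤ ∑ j, ((p₀ - ps j).roots.toFinset).card := Finset.card_biUnion_le
        _ ≤ ∑ _j : Fin Δ, d := Finset.sum_le_sum (fun j _ =>
              le_trans (Multiset.toFinset_card_le _)
                (le_trans (Polynomial.card_roots' _)
                  (le_trans (Polynomial.natDegree_sub_le _ _) (max_le h0 (hps j)))))
        _ = Δ * d := by simp [Finset.sum_const, Finset.card_univ]
    omega
end

section
/- Let G be a finite simple graph with maximum degree Δ, let φ : V → {1, …, N} be a proper vertex-coloring of G, and let S_1, …, S_N be subsets of {1, …, m} forming a Δ-union-free family: for every index c_0 and every Δ indices c_1, …, c_Δ with c_i ≠ c_0 for all i, S_{c_0} ⊄ S_{c_1} ∪ … ∪ S_{c_Δ}. Then every vertex v can be assigned a color ψ(v) ∈ S_{φ(v)} \ ∪_{u ∈ N(v)} S_{φ(u)}, and every such assignment ψ : V → {1, …, m} is a proper vertex-coloring of G. In particular, G admits a proper m-vertex-coloring. -/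
/-- **Linial's color reduction via union-free families.** Let `G` have
maximum degree `Δ`, let `φ` be a proper vertex-coloring of `G` with `N` colors, and let
`S_1, …, S_N ⊆ {1, …, m}` be a `Δ`-union-free family: for every index `c₀` and every
`Δ` indices `c_1, …, c_Δ`, all distinct from `c₀`, `S_{c₀}` is not contained in
`S_{c_1} ∪ … ∪ S_{c_Δ}`. Then every vertex `v` can be assigned a color
`ψ v ∈ S_{φ v} \ ⋃_{u ∈ N(v)} S_{φ u}`, and every such assignment `ψ` is a proper
vertex-coloring of `G` with `m` colors. -/
theorem stmt_18 {V : Type*} [Fintype V] [DecidableEq V] (G : SimpleGraph V)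
    [DecidableRel G.Adj] (Δ N m : ℕ) (hΔ : G.maxDegree = Δ)
    (φ : V → Fin N) (hφ : ∀ u v : V, G.Adj u v → φ u ≠ φ v)
    (S : Fin N → Finset (Fin m))
    (hUF : ∀ (c₀ : Fin N) (cs : Fin Δ → Fin N), (∀ j, cs j ≠ c₀) →
      ¬ S c₀ ⊆ Finset.univ.biUnion (fun j => S (cs j))) :
    (∀ v : V, ∃ x : Fin m, x ∈ S (φ v) ∧ ∀ u : V, G.Adj v u → x ∉ S (φ u)) ∧
    (∀ ψ : V → Fin m,
      (∀ v : V, ψ v ∈ S (φ v) ∧ ∀ u : V, G.Adj v u → ψ v ∉ S (φ u)) →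
      ∀ u v : V, G.Adj u v → ψ u ≠ ψ v) := by
  constructor
  · intro v
    -- a padding vertex with color ≠ φ v, when Δ > 0
    have hpad : Δ = 0 ∨ ∃ p : V, φ p ≠ φ v := by
      rcases Nat.eq_zero_or_pos Δ with h | h
      · exact Or.inl h
      · right
        have : Nonempty V := ⟨v⟩
        obtain ⟨w, hw⟩ := G.exists_maximal_degree_vertex
        have hw' : 0 < G.degree w := by omega
        rw [← SimpleGraph.card_neighborFinset_eq_degree, Finset.card_pos] at hw'
        obtain ⟨u, hu⟩ := hw'
        rw [SimpleGraph.mem_neighborFinset] at hu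
        have hwu : φ w ≠ φ u := hφ w u hu
        by_cases hc : φ w = φ v
        · exact ⟨u, fun h => hwu (hc.trans h.symm)⟩
        · exact ⟨w, hc⟩
    rcases hpad with h0 | ⟨p, hp⟩
    · -- Δ = 0 : no neighbors, and S (φ v) is nonempty
      subst h0
      have := hUF (φ v) (Fin.elim0) (fun j => j.elim0)
      have hne : (S (φ v)).Nonempty := by
        by_contra hne
        rw [Finset.not_nonempty_iff_eq_empty] at hne
        exact this (by simp [hne])
      obtain ⟨x, hx⟩ := hne
      refine ⟨x, hx, fun u hadj => ?_⟩
      exfalso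
      have hd : G.degree v ≤ 0 := hΔ ▸ G.degree_le_maxDegree v
      have : u ∈ G.neighborFinset v := (SimpleGraph.mem_neighborFinset G v u).2 hadj
      rw [← SimpleGraph.card_neighborFinset_eq_degree] at hd
      have := Finset.card_pos.2 ⟨u, this⟩
      omega
    · set l := (G.neighborFinset v).toList with hl
      have hlen : l.length ≤ Δ := by
        rw [hl, Finset.length_toList, SimpleGraph.card_neighborFinset_eq_degree]
        exact hΔ ▸ G.degree_le_maxDegree v
      set cs : Fin Δ → Fin N := fun j => φ (l.getD j.val p) with hcs
      have hmem : ∀ j : ℕ, j < l.length → l.getD j p ∈ G.neighborFinset v := by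
        intro j hj
        rw [List.getD_eq_getElem l p hj]
        have := List.getElem_mem hj (l := l)
        exact Finset.mem_toList.1 this
      have hne : ∀ j, cs j ≠ φ v := by
        intro j
        by_cases hj : (j : ℕ) < l.length
        · have := hmem j hj
          rw [SimpleGraph.mem_neighborFinset] at this
          exact fun h => hφ v _ this h.symm
        · have : l.getD j.val p = p := List.getD_eq_default l p (by omega)
          rw [hcs]; simp only [this]; exact hp
      have := hUF (φ v) cs hne
      rw [Finset.not_subset] at this
      obtain ⟨x, hx1, hx2⟩ := this
      refine ⟨x, hx1, fun u hadj hxu => ?_⟩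
      have hu : u ∈ G.neighborFinset v := (SimpleGraph.mem_neighborFinset G v u).2 hadj
      have hu' : u ∈ l := Finset.mem_toList.2 hu
      obtain ⟨i, hi, hiu⟩ := List.getElem_of_mem hu'
      have hiΔ : i < Δ := lt_of_lt_of_le hi hlen
      apply hx2
      rw [Finset.mem_biUnion]
      refine ⟨⟨i, hiΔ⟩, Finset.mem_univ _, ?_⟩
      have : cs ⟨i, hiΔ⟩ = φ u := by
        rw [hcs]; simp only []
        rw [List.getD_eq_getElem l p hi, hiu]
      rwa [this]
  · intro ψ hψ u v hadj heq
    have h1 := (hψ u).1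
    have h2 := (hψ v).2 u hadj.symm
    rw [← heq] at h2
    exact h2 h1
end

section
/- Let G be a finite simple graph with maximum degree Δ, let φ : V → {1, …, N} be a D-defective vertex-coloring of G, and let S_1, …, S_N be nonempty subsets of {1, …, m} with the following cover-free property: for every index c_0 and every list of at most Δ indices c_1, …, c_Δ (repetitions allowed), each distinct from c_0, there exists an element x ∈ S_{c_0} that belongs to fewer than ρ of the sets S_{c_1}, …, S_{c_Δ} (counted with multiplicity). Then G admits a (D + ρ)-defective vertex-coloring ψ : V → {1, …, m}; indeed it suffices that each vertex v choose ψ(v) to be an element of S_{φ(v)} belonging to fewer than ρ of the sets S_{φ(u)} taken over neighbors u of v with φ(u) ≠ φ(v). -/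
/-- **defective color reduction via cover-free families.** Let `G` have
maximum degree `Δ`, let `φ` be a `D`-defective vertex-coloring with `N` colors, and let
`S_1, …, S_N` be nonempty subsets of `{1, …, m}` with the cover-free property: for every
index `c₀` and every multiset of at most `Δ` indices (repetitions allowed), all distinct
from `c₀`, there is an element of `S_{c₀}` lying in fewer than `ρ` of the corresponding
sets (counted with multiplicity). Then `G` admits a `(D + ρ)`-defective vertex-coloring
`ψ` with `m` colors; indeed, a suitable choice `ψ v ∈ S_{φ v}` (belonging to fewer than
`ρ` of the sets `S_{φ u}` over neighbors `u` of `v` with `φ u ≠ φ v`) always exists,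
and every such choice is `(D + ρ)`-defective. -/
theorem stmt_19 {V : Type*} [Fintype V] [DecidableEq V] (G : SimpleGraph V)
    [DecidableRel G.Adj] (Δ N m D ρ : ℕ) (hΔ : G.maxDegree = Δ)
    (φ : V → Fin N)
    (hdef : ∀ v : V, ((G.neighborFinset v).filter (fun u => φ u = φ v)).card ≤ D)
    (S : Fin N → Finset (Fin m)) (hS : ∀ c, (S c).Nonempty)
    (hCF : ∀ (c₀ : Fin N) (l : Multiset (Fin N)), Multiset.card l ≤ Δ →
      (∀ c ∈ l, c ≠ c₀) →
      ∃ x ∈ S c₀, l.countP (fun c => x ∈ S c) < ρ) :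
    (∃ ψ : V → Fin m, ∀ v : V, ψ v ∈ S (φ v) ∧
      ((G.neighborFinset v).filter (fun u => φ u ≠ φ v ∧ ψ v ∈ S (φ u))).card < ρ) ∧
    (∀ ψ : V → Fin m,
      (∀ v : V, ψ v ∈ S (φ v) ∧
        ((G.neighborFinset v).filter (fun u => φ u ≠ φ v ∧ ψ v ∈ S (φ u))).card < ρ) →
      ∀ v : V, ((G.neighborFinset v).filter (fun u => ψ u = ψ v)).card ≤ D + ρ) := by
  constructor
  · have hex : ∀ v : V, ∃ x : Fin m, x ∈ S (φ v) ∧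
        ((G.neighborFinset v).filter (fun u => φ u ≠ φ v ∧ x ∈ S (φ u))).card < ρ := by
      intro v
      set T := (G.neighborFinset v).filter (fun u => φ u ≠ φ v) with hT
      have hcard : Multiset.card (T.val.map φ) ≤ Δ := by
        simp only [Multiset.card_map]
        calc (Multiset.card T.val) = T.card := rfl
          _ ≤ (G.neighborFinset v).card := Finset.card_filter_le _ _
          _ = G.degree v := (G.card_neighborFinset_eq_degree v)
          _ ≤ G.maxDegree := G.degree_le_maxDegree v
          _ = Δ := hΔ
      have hne : ∀ c ∈ T.val.map φ, c ≠ φ v := by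
        intro c hc
        obtain ⟨u, hu, rfl⟩ := Multiset.mem_map.mp hc
        exact (Finset.mem_filter.mp hu).2
      obtain ⟨x, hx, hcnt⟩ := hCF (φ v) (T.val.map φ) hcard hne
      refine ⟨x, hx, ?_⟩
      have : (T.val.map φ).countP (fun c => x ∈ S c)
          = ((G.neighborFinset v).filter (fun u => φ u ≠ φ v ∧ x ∈ S (φ u))).card := by
        rw [Multiset.countP_map]
        show (T.filter fun u => x ∈ S (φ u)).card = _
        rw [hT, Finset.filter_filter]
      rwa [this] at hcnt
    exact ⟨fun v => (hex v).choose, fun v => (hex v).choose_spec⟩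
  · intro ψ hψ v
    have hsub : (G.neighborFinset v).filter (fun u => ψ u = ψ v) ⊆
        ((G.neighborFinset v).filter (fun u => φ u = φ v)) ∪
        ((G.neighborFinset v).filter (fun u => φ u ≠ φ v ∧ ψ v ∈ S (φ u))) := by
      intro u hu
      obtain ⟨hadj, heq⟩ := Finset.mem_filter.mp hu
      by_cases h : φ u = φ v
      · exact Finset.mem_union_left _ (Finset.mem_filter.mpr ⟨hadj, h⟩)
      · refine Finset.mem_union_right _ (Finset.mem_filter.mpr ⟨hadj, h, ?_⟩)
        rw [← heq]
        exact (hψ u).1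
    calc ((G.neighborFinset v).filter (fun u => ψ u = ψ v)).card
        ≤ _ := Finset.card_le_card hsub
      _ ≤ ((G.neighborFinset v).filter (fun u => φ u = φ v)).card +
          ((G.neighborFinset v).filter (fun u => φ u ≠ φ v ∧ ψ v ∈ S (φ u))).card :=
            Finset.card_union_le _ _
      _ ≤ D + ρ := Nat.add_le_add (hdef v) (le_of_lt (hψ v).2)
end
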